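/- Let C_n = {(x_1,…,x_n) ∈ ℝ^n : x_1 ≥ 0, x_1² ≥ x_2² + ⋯ + x_n²} and d = 2^{⌊n/2⌋}. There exists a real linear map φ from ℝ^n to the self-adjoint d×d complex matrices such that (1/d)·Tr(φ(x)φ(y)) = ⟨x, y⟩ for all x, y, and φ maps C_n into the cone of positive semidefinite matrices. -/

import Mathlib

open scoped ComplexOrder
open Matrix

namespace ConeEmbedAux

/-! ### Tensor products of 2×2 matrices, entrywise -/

variable {m : ℕ}

def tensor (P : Fin m → Matrix (Fin 2) (Fin 2) ℂ) :
    Matrix (Fin m → Fin 2) (Fin m → Fin 2) ℂ :=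
  Matrix.of fun s t => ∏ j, P j (s j) (t j)

lemma tensor_apply (P : Fin m → Matrix (Fin 2) (Fin 2) ℂ) (s t) :
    tensor P s t = ∏ j, P j (s j) (t j) := rfl

lemma tensor_mul (P Q : Fin m → Matrix (Fin 2) (Fin 2) ℂ) :
    tensor P * tensor Q = tensor (fun j => P j * Q j) := by
  ext s t
  simp only [Matrix.mul_apply, tensor_apply, ← Finset.prod_mul_distrib]
  rw [Fintype.prod_sum]

lemma tensor_one : tensor (fun _ : Fin m => (1 : Matrix (Fin 2) (Fin 2) ℂ)) = 1 := by
  ext s t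
  simp only [tensor_apply, Matrix.one_apply, Finset.prod_boole]
  by_cases h : s = t
  · simp [h]
  · rw [if_neg h, if_neg]
    intro hall
    exact h (funext fun j => hall j (Finset.mem_univ j))

lemma tensor_conjTranspose (P : Fin m → Matrix (Fin 2) (Fin 2) ℂ) :
    (tensor P)ᴴ = tensor (fun j => (P j)ᴴ) := by
  ext s t
  simp [tensor_apply, Matrix.conjTranspose_apply, map_prod]

lemma tensor_trace (P : Fin m → Matrix (Fin 2) (Fin 2) ℂ) :
    (tensor P).trace = ∏ j, (P j).trace := by
  simp only [Matrix.trace, Matrix.diag, tensor_apply]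
  rw [Fintype.prod_sum]

lemma tensor_neg (P Q : Fin m → Matrix (Fin 2) (Fin 2) ℂ) (k : Fin m)
    (hk : P k = -(Q k)) (h : ∀ j, j ≠ k → P j = Q j) : tensor P = -tensor Q := by
  ext s t
  simp only [tensor_apply, Matrix.neg_apply]
  rw [← Finset.mul_prod_erase _ _ (Finset.mem_univ k),
      ← Finset.mul_prod_erase _ (fun j => Q j (s j) (t j)) (Finset.mem_univ k), hk]
  rw [Finset.prod_congr rfl fun j hj => by rw [h j (Finset.ne_of_mem_erase hj)]]
  simp


noncomputable def PX : Matrix (Fin 2) (Fin 2) ℂ := !![0, 1; 1, 0]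
noncomputable def PY : Matrix (Fin 2) (Fin 2) ℂ := !![0, -Complex.I; Complex.I, 0]
noncomputable def PZ : Matrix (Fin 2) (Fin 2) ℂ := !![1, 0; 0, -1]

lemma hXX : PX * PX = 1 := by
  simp [PX, Matrix.mul_fin_two]; rw [show (1 : Matrix (Fin 2) (Fin 2) ℂ) = !![1,0;0,1] by ext i j; fin_cases i <;> fin_cases j <;> simp]

lemma hYY : PY * PY = 1 := by
  simp [PY, Matrix.mul_fin_two, Complex.I_mul_I]; rw [show (1 : Matrix (Fin 2) (Fin 2) ℂ) = !![1,0;0,1] by ext i j; fin_cases i <;> fin_cases j <;> simp]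

lemma hZZ : PZ * PZ = 1 := by
  simp [PZ, Matrix.mul_fin_two]; rw [show (1 : Matrix (Fin 2) (Fin 2) ℂ) = !![1,0;0,1] by ext i j; fin_cases i <;> fin_cases j <;> simp]

lemma hXY : PX * PY = -(PY * PX) := by simp [PX, PY, Matrix.mul_fin_two]
lemma hXZ : PX * PZ = -(PZ * PX) := by simp [PX, PZ, Matrix.mul_fin_two]
lemma hYZ : PY * PZ = -(PZ * PY) := by simp [PY, PZ, Matrix.mul_fin_two]

lemma trXY : (PX * PY).trace = 0 := by simp [PX, PY, Matrix.mul_fin_two, Matrix.trace_fin_two]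
lemma trYX : (PY * PX).trace = 0 := by simp [PX, PY, Matrix.mul_fin_two, Matrix.trace_fin_two]
lemma trXZ : (PX * PZ).trace = 0 := by simp [PX, PZ, Matrix.mul_fin_two, Matrix.trace_fin_two]
lemma trZX : (PZ * PX).trace = 0 := by simp [PX, PZ, Matrix.mul_fin_two, Matrix.trace_fin_two]
lemma trYZ : (PY * PZ).trace = 0 := by simp [PY, PZ, Matrix.mul_fin_two, Matrix.trace_fin_two]
lemma trZY : (PZ * PY).trace = 0 := by simp [PY, PZ, Matrix.mul_fin_two, Matrix.trace_fin_two]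
lemma trX : PX.trace = 0 := by simp [PX, Matrix.trace_fin_two]
lemma trY : PY.trace = 0 := by simp [PY, Matrix.trace_fin_two]
lemma trZ : PZ.trace = 0 := by simp [PZ, Matrix.trace_fin_two]

lemma hermX : PXᴴ = PX := by ext i j; fin_cases i <;> fin_cases j <;> simp [PX]
lemma hermY : PYᴴ = PY := by ext i j; fin_cases i <;> fin_cases j <;> simp [PY]
lemma hermZ : PZᴴ = PZ := by ext i j; fin_cases i <;> fin_cases j <;> simp [PZ]


variable {N : Type*} [Fintype N] [DecidableEq N]

lemma smul_posSemidef {M : Matrix N N ℂ} (hM : M.PosSemidef) {r : ℝ} (hr : 0 ≤ r) :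
    (r • M).PosSemidef := by
  refine ⟨?_, fun x => ?_⟩
  · have := hM.1
    unfold Matrix.IsHermitian at this ⊢
    rw [Matrix.conjTranspose_smul, this, star_trivial]
  · have h := hM.2 x
    exact (hM.smul hr).2 x

lemma real_smul_isHermitian {M : Matrix N N ℂ} (hM : M.IsHermitian) (r : ℝ) :
    (r • M).IsHermitian := by
  unfold Matrix.IsHermitian at hM ⊢
  rw [Matrix.conjTranspose_smul, hM, star_trivial]

lemma shift_posSemidef {A : Matrix N N ℂ} (hA : A.IsHermitian)
    {c t : ℝ} (hc : 0 ≤ c) (hA2 : A * A = c • (1 : Matrix N N ℂ)) (ht : Real.sqrt c ≤ t) :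
    (t • (1 : Matrix N N ℂ) + A).PosSemidef := by
  set s := Real.sqrt c with hs
  have hs0 : 0 ≤ s := Real.sqrt_nonneg c
  have hss : s * s = c := Real.mul_self_sqrt hc
  have hB : (s • (1 : Matrix N N ℂ) + A).PosSemidef := by
    rcases eq_or_lt_of_le hs0 with h0 | h0
    · have hc0 : c = 0 := by nlinarith
      have hA0 : A = 0 := by
        have h1 : Aᴴ * A = 0 := by rw [hA.eq, hA2, hc0, zero_smul]
        exact Matrix.conjTranspose_mul_self_eq_zero.mp h1
      rw [← h0, hA0, zero_smul, add_zero]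
      exact Matrix.PosSemidef.zero
    · have hH : (s • (1 : Matrix N N ℂ) + A)ᴴ = s • 1 + A := by
        rw [Matrix.conjTranspose_add, Matrix.conjTranspose_smul, Matrix.conjTranspose_one,
          hA.eq, star_trivial]
      have hsq : (s • (1 : Matrix N N ℂ) + A) * (s • (1 : Matrix N N ℂ) + A)
          = (2 * s) • (s • (1 : Matrix N N ℂ) + A) := by
        rw [add_mul, mul_add, mul_add, hA2]
        simp only [smul_mul_assoc, mul_smul_comm, one_mul, mul_one]
        match_scalars <;> push_cast <;> nlinarith [hss]
      have key : s • (1 : Matrix N N ℂ) + A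
          = (2 * s)⁻¹ • ((s • (1 : Matrix N N ℂ) + A)ᴴ * (s • (1 : Matrix N N ℂ) + A)) := by
        rw [hH, hsq, smul_smul, inv_mul_cancel₀ (by positivity), one_smul]
      rw [key]
      exact smul_posSemidef (Matrix.posSemidef_conjTranspose_mul_self _) (by positivity)
  have hdecomp : t • (1 : Matrix N N ℂ) + A = (t - s) • 1 + (s • 1 + A) := by
    rw [sub_smul]; abel
  rw [hdecomp]
  exact (smul_posSemidef Matrix.PosSemidef.one (sub_nonneg.2 ht)).add hB

lemma sum_anticomm_sq {ι : Type*} [DecidableEq ι] (E : Finset ι) (c : ι → ℝ)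
    (G : ι → Matrix N N ℂ) (h1 : ∀ i ∈ E, G i * G i = 1)
    (h2 : ∀ i ∈ E, ∀ j ∈ E, i ≠ j → G i * G j = -(G j * G i)) :
    (∑ i ∈ E, c i • G i) * (∑ i ∈ E, c i • G i)
      = (∑ i ∈ E, c i ^ 2) • (1 : Matrix N N ℂ) := by
  rw [Finset.sum_mul_sum]
  have step : ∀ i ∈ E, ∑ j ∈ E, (c i • G i) * (c j • G j)
      = c i ^ 2 • (1 : Matrix N N ℂ) + ∑ j ∈ E.erase i, (c i * c j) • (G i * G j) := by
    intro i hi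
    rw [← Finset.add_sum_erase _ _ hi, smul_mul_smul_comm, h1 i hi, ← sq]
    congr 1
    exact Finset.sum_congr rfl fun j _ => smul_mul_smul_comm _ _ _ _
  rw [Finset.sum_congr rfl step, Finset.sum_add_distrib, ← Finset.sum_smul]
  have hzero : ∑ i ∈ E, ∑ j ∈ E.erase i, (c i * c j) • (G i * G j) = 0 := by
    rw [Finset.sum_sigma']
    refine Finset.sum_involution (fun p _ => ⟨p.2, p.1⟩) ?_ ?_ ?_ ?_
    · rintro ⟨i, j⟩ hp
      simp only [Finset.mem_sigma, Finset.mem_erase] at hp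
      obtain ⟨hi, hj, hjE⟩ := hp
      rw [h2 i hi j hjE (Ne.symm hj), smul_neg, mul_comm (c i)]
      exact neg_add_cancel _
    · rintro ⟨i, j⟩ hp _
      simp only [Finset.mem_sigma, Finset.mem_erase] at hp
      intro hEq
      exact hp.2.1 (congrArg Sigma.fst hEq)
    · rintro ⟨i, j⟩ hp
      simp only [Finset.mem_sigma, Finset.mem_erase] at hp ⊢
      exact ⟨hp.2.2, Ne.symm hp.2.1, hp.1⟩
    · rintro ⟨i, j⟩ _; rfl
  rw [hzero, add_zero]

lemma trace_submatrix_equiv' {M' : Type*} [Fintype M'] (M : Matrix N N ℂ) (e : M' ≃ N) :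
    (M.submatrix e e).trace = M.trace := by
  simp only [Matrix.trace, Matrix.diag, Matrix.submatrix_apply]
  exact Fintype.sum_equiv e _ _ fun i => rfl


/-! ### The gamma matrices -/

variable (n : ℕ)

noncomputable def Pfam (i : Fin n) : Fin (n / 2) → Matrix (Fin 2) (Fin 2) ℂ := fun j =>
  if i.val = 0 then 1
  else if (j : ℕ) < (i.val - 1) / 2 then PZ
  else if (j : ℕ) = (i.val - 1) / 2 then (if (i.val - 1) % 2 = 0 then PX else PY)
  else 1

noncomputable def Γm (i : Fin n) : Matrix (Fin (n / 2) → Fin 2) (Fin (n / 2) → Fin 2) ℂ :=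
  tensor (Pfam n i)

lemma Pfam_herm (i : Fin n) (j : Fin (n / 2)) : (Pfam n i j)ᴴ = Pfam n i j := by
  unfold Pfam
  split_ifs <;> simp [hermX, hermY, hermZ]

lemma Pfam_sq (i : Fin n) (j : Fin (n / 2)) : Pfam n i j * Pfam n i j = 1 := by
  unfold Pfam
  split_ifs <;> simp [hXX, hYY, hZZ]

lemma Γm_herm (i : Fin n) : (Γm n i).IsHermitian := by
  unfold Matrix.IsHermitian
  rw [Γm, tensor_conjTranspose]
  exact congrArg tensor (funext fun j => Pfam_herm n i j)

lemma Γm_sq (i : Fin n) : Γm n i * Γm n i = 1 := by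
  rw [Γm, tensor_mul]
  rw [show (fun j => Pfam n i j * Pfam n i j) = fun _ : Fin (n/2) => (1 : Matrix (Fin 2) (Fin 2) ℂ)
    from funext fun j => Pfam_sq n i j]
  exact tensor_one

lemma Γm_zero (i : Fin n) (hi : i.val = 0) : Γm n i = 1 := by
  rw [Γm, show Pfam n i = fun _ : Fin (n/2) => (1 : Matrix (Fin 2) (Fin 2) ℂ) by
    funext j; unfold Pfam; rw [if_pos hi]]
  exact tensor_one

lemma q_lt (i : Fin n) (hi : i.val ≠ 0) : (i.val - 1) / 2 < n / 2 := by
  have := i.isLt; omega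

lemma Γm_trace (i : Fin n) (hi : i.val ≠ 0) : (Γm n i).trace = 0 := by
  rw [Γm, tensor_trace]
  refine Finset.prod_eq_zero (Finset.mem_univ (⟨(i.val - 1) / 2, q_lt n i hi⟩ : Fin (n/2))) ?_
  unfold Pfam
  rw [if_neg hi, if_neg (lt_irrefl _), if_pos rfl]
  split_ifs <;> simp [trX, trY]

lemma hYX : PY * PX = -(PX * PY) := by rw [hXY, neg_neg]
lemma hZX : PZ * PX = -(PX * PZ) := by rw [hXZ, neg_neg]
lemma hZY : PZ * PY = -(PY * PZ) := by rw [hYZ, neg_neg]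

/-- Per-position commutation data for two distinct nonzero gammas. -/
lemma Pfam_cross (i i' : Fin n) (hi : i.val ≠ 0) (hi' : i'.val ≠ 0) (hne : i ≠ i')
    (j : Fin (n / 2)) :
    (((j : ℕ) = min ((i.val - 1) / 2) ((i'.val - 1) / 2)) →
        Pfam n i j * Pfam n i' j = -(Pfam n i' j * Pfam n i j) ∧
          (Pfam n i j * Pfam n i' j).trace = 0) ∧
    (((j : ℕ) ≠ min ((i.val - 1) / 2) ((i'.val - 1) / 2)) →
        Pfam n i j * Pfam n i' j = Pfam n i' j * Pfam n i j) := by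
  set a := i.val - 1 with ha
  set b := i'.val - 1 with hb
  have hab : a ≠ b := by
    have := Fin.val_ne_of_ne hne
    omega
  unfold Pfam
  rw [if_neg hi, if_neg hi']
  constructor
  · intro hj
    rcases Nat.lt_trichotomy (a / 2) (b / 2) with hq | hq | hq
    · rw [min_eq_left hq.le] at hj
      split_ifs <;>
        first
          | omega
          | exact ⟨hXZ, trXZ⟩
          | exact ⟨hYZ, trYZ⟩
    · have hr : a % 2 ≠ b % 2 := by omega
      rw [hq, min_self] at hj
      split_ifs <;>
        first
          | omega
          | exact ⟨hXY, trXY⟩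
          | exact ⟨hYX, trYX⟩
    · rw [min_eq_right hq.le] at hj
      split_ifs <;>
        first
          | omega
          | exact ⟨hZX, trZX⟩
          | exact ⟨hZY, trZY⟩
  · intro hj
    rcases Nat.lt_trichotomy (a / 2) (b / 2) with hq | hq | hq
    · rw [min_eq_left hq.le] at hj
      split_ifs <;> first | omega | rfl | simp
    · rw [hq, min_self] at hj
      split_ifs <;> first | omega | rfl | simp
    · rw [min_eq_right hq.le] at hj
      split_ifs <;> first | omega | rfl | simp

lemma isHermitian_sum {N : Type*} [Fintype N] {ι : Type*} (s : Finset ι)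
    (f : ι → Matrix N N ℂ) (h : ∀ i ∈ s, (f i).IsHermitian) :
    (∑ i ∈ s, f i).IsHermitian := by
  unfold Matrix.IsHermitian at *
  rw [Matrix.conjTranspose_sum]
  exact Finset.sum_congr rfl h

lemma min_lt (i i' : Fin n) (hi : i.val ≠ 0) :
    min ((i.val - 1) / 2) ((i'.val - 1) / 2) < n / 2 :=
  lt_of_le_of_lt (min_le_left _ _) (q_lt n i hi)

lemma Γm_anticomm (i i' : Fin n) (hi : i.val ≠ 0) (hi' : i'.val ≠ 0) (hne : i ≠ i') :
    Γm n i * Γm n i' = -(Γm n i' * Γm n i) := by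
  rw [Γm, Γm, tensor_mul, tensor_mul]
  refine tensor_neg _ _ ⟨min ((i.val - 1) / 2) ((i'.val - 1) / 2), min_lt n i i' hi⟩ ?_ ?_
  · exact ((Pfam_cross n i i' hi hi' hne _).1 rfl).1
  · intro j hj
    refine (Pfam_cross n i i' hi hi' hne j).2 ?_
    intro hval
    exact hj (Fin.ext hval)

lemma Γm_mul_trace_ne (i i' : Fin n) (hi : i.val ≠ 0) (hi' : i'.val ≠ 0) (hne : i ≠ i') :
    (Γm n i * Γm n i').trace = 0 := by
  rw [Γm, Γm, tensor_mul, tensor_trace]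
  refine Finset.prod_eq_zero
    (Finset.mem_univ (⟨min ((i.val - 1) / 2) ((i'.val - 1) / 2), min_lt n i i' hi⟩ : Fin (n/2))) ?_
  exact ((Pfam_cross n i i' hi hi' hne _).1 rfl).2

lemma Γm_mul_trace (i i' : Fin n) :
    (Γm n i * Γm n i').trace = if i = i' then ((2 : ℂ) ^ (n / 2)) else 0 := by
  by_cases h : i = i'
  · subst h
    rw [if_pos rfl, Γm_sq, Matrix.trace_one]
    simp [Fintype.card_pi]
  · rw [if_neg h]
    by_cases hi : i.val = 0
    · have hi' : i'.val ≠ 0 := fun h0 => h (Fin.ext (by omega))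
      rw [Γm_zero n i hi, one_mul]
      exact Γm_trace n i' hi'
    · by_cases hi' : i'.val = 0
      · rw [Γm_zero n i' hi', mul_one]
        exact Γm_trace n i hi
      · exact Γm_mul_trace_ne n i i' hi hi' h

/-! ### The linear map -/

noncomputable def phi0 : (Fin n → ℝ) →ₗ[ℝ] Matrix (Fin (n / 2) → Fin 2) (Fin (n / 2) → Fin 2) ℂ where
  toFun x := ∑ i, x i • Γm n i
  map_add' x y := by
    simp only [Pi.add_apply, add_smul, Finset.sum_add_distrib]
  map_smul' r x := by
    simp only [Pi.smul_apply, smul_eq_mul, RingHom.id_apply, Finset.smul_sum, smul_smul]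

lemma phi0_apply (x : Fin n → ℝ) : phi0 n x = ∑ i, x i • Γm n i := rfl

lemma phi0_herm (x : Fin n → ℝ) : (phi0 n x).IsHermitian := by
  rw [phi0_apply]
  exact isHermitian_sum _ _ fun i _ => real_smul_isHermitian (Γm_herm n i) (x i)

lemma phi0_mul_trace (x y : Fin n → ℝ) :
    (phi0 n x * phi0 n y).trace = ∑ i, (x i * y i : ℝ) • ((2 : ℂ) ^ (n / 2)) := by
  rw [phi0_apply, phi0_apply, Finset.sum_mul_sum]
  have : ∀ i ∈ Finset.univ, ∀ j ∈ Finset.univ,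
      (x i • Γm n i) * (y j • Γm n j) = (x i * y j) • (Γm n i * Γm n j) :=
    fun i _ j _ => smul_mul_smul_comm _ _ _ _
  rw [Finset.sum_congr rfl fun i hi => Finset.sum_congr rfl fun j hj => this i hi j hj]
  rw [Matrix.trace_sum]
  simp only [Matrix.trace_sum, Matrix.trace_smul]
  rw [Finset.sum_congr rfl fun i _ => Finset.sum_congr rfl fun j _ => by
    rw [Γm_mul_trace n i j]]
  simp [Finset.sum_ite_eq]

lemma phi0_posSemidef (hn : 0 < n) (x : Fin n → ℝ) (h0 : 0 ≤ x ⟨0, hn⟩)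
    (hsum : ∑ i ∈ Finset.univ.erase ⟨0, hn⟩, x i ^ 2 ≤ x ⟨0, hn⟩ ^ 2) :
    (phi0 n x).PosSemidef := by
  set z : Fin n := ⟨0, hn⟩ with hz
  set A : Matrix (Fin (n / 2) → Fin 2) (Fin (n / 2) → Fin 2) ℂ :=
    ∑ i ∈ Finset.univ.erase z, x i • Γm n i with hA
  have hsplit : phi0 n x = x z • (1 : Matrix (Fin (n / 2) → Fin 2) (Fin (n / 2) → Fin 2) ℂ) + A := by
    rw [phi0_apply, ← Finset.add_sum_erase _ _ (Finset.mem_univ z), Γm_zero n z rfl]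
  have hAherm : A.IsHermitian :=
    isHermitian_sum _ _ fun i _ => real_smul_isHermitian (Γm_herm n i) (x i)
  have hAsq : A * A = (∑ i ∈ Finset.univ.erase z, x i ^ 2) •
      (1 : Matrix (Fin (n / 2) → Fin 2) (Fin (n / 2) → Fin 2) ℂ) := by
    refine sum_anticomm_sq _ _ _ (fun i _ => Γm_sq n i) ?_
    intro i hiE j hjE hij
    have hi : i.val ≠ 0 := fun h => (Finset.mem_erase.mp hiE).1 (Fin.ext (by simpa using h))
    have hj : j.val ≠ 0 := fun h => (Finset.mem_erase.mp hjE).1 (Fin.ext (by simpa using h))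
    exact Γm_anticomm n i j hi hj hij
  rw [hsplit]
  refine shift_posSemidef hAherm (Finset.sum_nonneg fun i _ => sq_nonneg _) hAsq ?_
  calc Real.sqrt (∑ i ∈ Finset.univ.erase z, x i ^ 2)
      ≤ Real.sqrt (x z ^ 2) := Real.sqrt_le_sqrt hsum
    _ = |x z| := Real.sqrt_sq_eq_abs _
    _ = x z := abs_of_nonneg h0
end ConeEmbedAux

open ConeEmbedAux in
theorem exists_isometric_embedding_of_cone_into_posSemidef (n : ℕ) (hn : 0 < n) :
    ∃ φ : (Fin n → ℝ) →ₗ[ℝ] Matrix (Fin (2 ^ (n / 2))) (Fin (2 ^ (n / 2))) ℂ,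
      (∀ x, (φ x).IsHermitian) ∧
      (∀ x y : Fin n → ℝ,
        (1 / (2 ^ (n / 2) : ℂ)) * (φ x * φ y).trace = ((∑ i, x i * y i : ℝ) : ℂ)) ∧
      (∀ x : Fin n → ℝ, 0 ≤ x ⟨0, hn⟩ →
        ∑ i ∈ Finset.univ.erase ⟨0, hn⟩, x i ^ 2 ≤ x ⟨0, hn⟩ ^ 2 →
        (φ x).PosSemidef) := by
  refine ⟨(Matrix.reindexLinearEquiv ℝ ℂ (finFunctionFinEquiv) (finFunctionFinEquiv)).toLinearMap
    ∘ₗ phi0 n, ?_, ?_, ?_⟩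
  · intro x
    simp only [LinearMap.comp_apply, LinearEquiv.coe_coe, Matrix.reindexLinearEquiv_apply,
      Matrix.reindex_apply]
    exact (Matrix.isHermitian_submatrix_equiv _).2 (phi0_herm n x)
  · intro x y
    simp only [LinearMap.comp_apply, LinearEquiv.coe_coe, Matrix.reindexLinearEquiv_apply,
      Matrix.reindex_apply]
    rw [Matrix.submatrix_mul_equiv, trace_submatrix_equiv', phi0_mul_trace]
    have h2 : ((2 : ℂ) ^ (n / 2)) ≠ 0 := pow_ne_zero _ two_ne_zero
    simp only [Complex.real_smul]
    rw [Finset.mul_sum,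
      Finset.sum_congr rfl fun i (_ : i ∈ Finset.univ) => by
        rw [show (1 / ((2:ℂ)^(n/2))) * (((x i * y i : ℝ) : ℂ) * (2:ℂ)^(n/2))
            = ((x i * y i : ℝ) : ℂ) by field_simp]]
    push_cast
    rfl
  · intro x h0 hsum
    simp only [LinearMap.comp_apply, LinearEquiv.coe_coe, Matrix.reindexLinearEquiv_apply,
      Matrix.reindex_apply]
    exact (Matrix.posSemidef_submatrix_equiv _).2 (phi0_posSemidef n hn x h0 hsum)
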